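/- For every real number P, every τ ≥ 0, and natural numbers q ≤ r, |∫_0^τ ξ^q e^{iξP} dξ − Σ_{ℓ=0}^{r−q} (iP)^ℓ τ^{ℓ+q+1}/(ℓ! (ℓ+q+1))| ≤ |P|^{r+1−q} τ^{r+2} / ((r+1−q)! (r+2)). -/

import Mathlib

open Complex

private lemma pow_integral (x : ℝ) (ℓ : ℕ) :
    (∫ t in (0:ℝ)..x, ((t:ℂ))^ℓ) = (x:ℂ)^(ℓ+1) / (ℓ+1) := by
  calc (∫ t in (0:ℝ)..x, ((t:ℂ))^ℓ) = ∫ t in (0:ℝ)..x, ((t^ℓ : ℝ) : ℂ) := by norm_num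
    _ = ((∫ t in (0:ℝ)..x, t^ℓ : ℝ) : ℂ) := intervalIntegral.integral_ofReal
    _ = (x:ℂ)^(ℓ+1)/(ℓ+1) := by rw [integral_pow]; push_cast; ring

private lemma exp_I_integral (x : ℝ) :
    (∫ t in (0:ℝ)..x, Complex.exp (Complex.I * t)) =
      (Complex.exp (Complex.I * x) - 1) / Complex.I := by
  simpa using integral_exp_mul_complex (a := 0) (b := x) (c := Complex.I) I_ne_zero

private lemma E_rec (n : ℕ) (x : ℝ) :
    Complex.exp (Complex.I * x) - ∑ ℓ ∈ Finset.range (n+1), (Complex.I * x)^ℓ / ℓ.factorial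
      = ∫ t in (0:ℝ)..x, Complex.I *
        (Complex.exp (Complex.I * t) - ∑ ℓ ∈ Finset.range n, (Complex.I * t)^ℓ / ℓ.factorial) := by
  have c1 : Continuous fun t : ℝ => Complex.exp (Complex.I * t) :=
    Complex.continuous_exp.comp (continuous_const.mul Complex.continuous_ofReal)
  have c2 : ∀ ℓ : ℕ, Continuous fun t : ℝ => (Complex.I * t)^ℓ / (ℓ.factorial : ℂ) := fun ℓ =>
    ((continuous_const.mul Complex.continuous_ofReal).pow ℓ).div_const _
  have h2 : ∀ ℓ : ℕ, (∫ t in (0:ℝ)..x, (Complex.I * t)^ℓ / (ℓ.factorial : ℂ))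
      = (Complex.I)^ℓ / (ℓ.factorial : ℂ) * ((x:ℂ)^(ℓ+1) / (ℓ+1)) := by
    intro ℓ
    have : ∀ t : ℝ, (Complex.I * t)^ℓ / (ℓ.factorial : ℂ)
        = (Complex.I^ℓ / (ℓ.factorial : ℂ)) * (t:ℂ)^ℓ := by intro t; rw [mul_pow]; ring
    simp_rw [this]
    rw [intervalIntegral.integral_const_mul, pow_integral]
  rw [intervalIntegral.integral_const_mul,
    intervalIntegral.integral_sub (c1.intervalIntegrable 0 x)
      ((continuous_finset_sum _ fun ℓ _ => c2 ℓ).intervalIntegrable 0 x),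
    intervalIntegral.integral_finset_sum (fun ℓ _ => (c2 ℓ).intervalIntegrable 0 x),
    exp_I_integral]
  simp_rw [h2]
  rw [Finset.sum_range_succ' (fun ℓ => (Complex.I * x)^ℓ / (ℓ.factorial : ℂ))]
  rw [mul_sub, Finset.mul_sum]
  have hI : Complex.I * ((Complex.exp (Complex.I * x) - 1) / Complex.I)
      = Complex.exp (Complex.I * x) - 1 := by
    rw [mul_comm, div_mul_cancel₀ _ I_ne_zero]
  rw [hI]
  have hterm : ∀ ℓ : ℕ, Complex.I * (Complex.I^ℓ / (ℓ.factorial : ℂ) * ((x:ℂ)^(ℓ+1) / (ℓ+1)))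
      = (Complex.I * x)^(ℓ+1) / ((ℓ+1).factorial : ℂ) := by
    intro ℓ
    have hℓ : ((ℓ.factorial : ℂ)) ≠ 0 := Nat.cast_ne_zero.2 ℓ.factorial_ne_zero
    have hℓ1 : ((ℓ:ℂ) + 1) ≠ 0 := Nat.cast_add_one_ne_zero ℓ
    rw [Nat.factorial_succ, mul_pow]
    push_cast
    field_simp
    ring
  simp_rw [hterm]
  simp
  ring

private lemma exp_taylor_bound_nonneg : ∀ (n : ℕ) (x : ℝ), 0 ≤ x →
    ‖Complex.exp (Complex.I * x) - ∑ ℓ ∈ Finset.range n, (Complex.I * x)^ℓ / ℓ.factorial‖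
      ≤ x^n / n.factorial := by
  intro n
  induction n with
  | zero =>
    intro x hx
    simp [Complex.norm_exp]
  | succ n ih =>
    intro x hx
    rw [E_rec]
    have hb : ∀ t ∈ Set.Ioc (0:ℝ) x,
        ‖Complex.I * (Complex.exp (Complex.I * t) -
          ∑ ℓ ∈ Finset.range n, (Complex.I * t)^ℓ / ℓ.factorial)‖ ≤ t^n / n.factorial := by
      intro t ht
      rw [norm_mul, Complex.norm_I, one_mul]
      exact ih t ht.1.le
    calc ‖∫ t in (0:ℝ)..x, Complex.I * (Complex.exp (Complex.I * t) -
          ∑ ℓ ∈ Finset.range n, (Complex.I * t)^ℓ / ℓ.factorial)‖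
        ≤ |∫ t in (0:ℝ)..x, t^n / n.factorial| := by
          apply intervalIntegral.norm_integral_le_abs_of_norm_le
          · rw [Set.uIoc_of_le hx]
            filter_upwards [MeasureTheory.ae_restrict_mem measurableSet_Ioc] with t ht
            exact hb t ht
          · exact ((continuous_pow n).div_const _).intervalIntegrable 0 x
      _ = x^(n+1) / (n+1).factorial := by
          rw [intervalIntegral.integral_div, integral_pow,
            show (0:ℝ)^(n+1) = 0 from zero_pow n.succ_ne_zero, sub_zero]
          rw [_root_.abs_of_nonneg (by positivity)]
          rw [Nat.factorial_succ]
          push_cast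
          field_simp

private lemma exp_taylor_bound (n : ℕ) (x : ℝ) :
    ‖Complex.exp (Complex.I * x) - ∑ ℓ ∈ Finset.range n, (Complex.I * x)^ℓ / ℓ.factorial‖
      ≤ |x|^n / n.factorial := by
  rcases le_or_gt 0 x with hx | hx
  · rw [_root_.abs_of_nonneg hx]; exact exp_taylor_bound_nonneg n x hx
  · rw [_root_.abs_of_neg hx]
    have h := exp_taylor_bound_nonneg n (-x) (by linarith)
    refine le_trans (le_of_eq ?_) h
    have hconj : Complex.exp (Complex.I * ((-x : ℝ) : ℂ)) -
        ∑ ℓ ∈ Finset.range n, (Complex.I * ((-x : ℝ) : ℂ))^ℓ / ℓ.factorial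
        = starRingEnd ℂ (Complex.exp (Complex.I * x) -
            ∑ ℓ ∈ Finset.range n, (Complex.I * x)^ℓ / ℓ.factorial) := by
      rw [map_sub, map_sum, ← Complex.exp_conj]
      congr 1
      · congr 1
        rw [map_mul, Complex.conj_I, Complex.conj_ofReal]
        push_cast
        ring
      · refine Finset.sum_congr rfl fun ℓ _ => ?_
        rw [map_div₀, map_pow, map_mul, Complex.conj_I, Complex.conj_ofReal,
          Complex.conj_natCast]
        push_cast
        ring
    rw [hconj, RCLike.norm_conj]

/-- Taylor-expansion error bound for `∫_0^τ ξ^q e^{iξP} dξ` (Lemma `Taylor_bound`,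
full Taylor expansion case). -/
theorem taylor_bound_general (P τ : ℝ) (hτ : 0 ≤ τ) (q r : ℕ) (hqr : q ≤ r) :
    ‖(∫ ξ in (0:ℝ)..τ, (ξ:ℂ)^q * Complex.exp (Complex.I * (ξ:ℂ) * (P:ℂ))) -
        ∑ ℓ ∈ Finset.range (r - q + 1),
          (Complex.I * (P:ℂ))^ℓ * (τ:ℂ)^(ℓ+q+1) / ((ℓ.factorial : ℂ) * ((ℓ:ℂ)+(q:ℂ)+1))‖
      ≤ |P|^(r+1-q) * τ^(r+2) / ((r+1-q).factorial * (r+2)) := by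
  set n := r - q + 1 with hn
  have hn' : r + 1 - q = n := by omega
  have hqn : q + n = r + 2 - 1 := by omega
  -- continuity facts
  have cf : Continuous fun ξ : ℝ => (ξ:ℂ)^q * Complex.exp (Complex.I * (ξ:ℂ) * (P:ℂ)) :=
    (Complex.continuous_ofReal.pow q).mul
      (Complex.continuous_exp.comp ((continuous_const.mul Complex.continuous_ofReal).mul
        continuous_const))
  have cg : ∀ ℓ : ℕ, Continuous fun ξ : ℝ =>
      (ξ:ℂ)^q * ((Complex.I * (ξ:ℂ) * (P:ℂ))^ℓ / (ℓ.factorial : ℂ)) := fun ℓ =>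
    (Complex.continuous_ofReal.pow q).mul
      ((((continuous_const.mul Complex.continuous_ofReal).mul continuous_const).pow ℓ).div_const _)
  -- the sum equals an integral
  have hsum : ∑ ℓ ∈ Finset.range n,
        (Complex.I * (P:ℂ))^ℓ * (τ:ℂ)^(ℓ+q+1) / ((ℓ.factorial : ℂ) * ((ℓ:ℂ)+(q:ℂ)+1))
      = ∫ ξ in (0:ℝ)..τ, ∑ ℓ ∈ Finset.range n,
          (ξ:ℂ)^q * ((Complex.I * (ξ:ℂ) * (P:ℂ))^ℓ / (ℓ.factorial : ℂ)) := by
    rw [intervalIntegral.integral_finset_sum (fun ℓ _ => (cg ℓ).intervalIntegrable 0 τ)]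
    refine Finset.sum_congr rfl fun ℓ _ => ?_
    have hrw : ∀ ξ : ℝ, (ξ:ℂ)^q * ((Complex.I * (ξ:ℂ) * (P:ℂ))^ℓ / (ℓ.factorial : ℂ))
        = (Complex.I * (P:ℂ))^ℓ / (ℓ.factorial : ℂ) * (ξ:ℂ)^(ℓ+q) := by
      intro ξ
      rw [mul_pow, mul_pow, pow_add]
      ring
    simp_rw [hrw]
    rw [intervalIntegral.integral_const_mul, pow_integral]
    have h1 : ((ℓ:ℂ) + (q:ℂ) + 1) ≠ 0 := by
      exact_mod_cast Nat.cast_add_one_ne_zero (R := ℂ) (ℓ + q)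
    have h2 : ((ℓ.factorial : ℂ)) ≠ 0 := Nat.cast_ne_zero.2 ℓ.factorial_ne_zero
    push_cast
    field_simp
  rw [hsum, ← intervalIntegral.integral_sub (cf.intervalIntegrable 0 τ)
    ((continuous_finset_sum _ fun ℓ _ => cg ℓ).intervalIntegrable 0 τ)]
  -- pointwise bound
  have hb : ∀ ξ ∈ Set.Ioc (0:ℝ) τ,
      ‖(ξ:ℂ)^q * Complex.exp (Complex.I * (ξ:ℂ) * (P:ℂ)) - ∑ ℓ ∈ Finset.range n,
          (ξ:ℂ)^q * ((Complex.I * (ξ:ℂ) * (P:ℂ))^ℓ / (ℓ.factorial : ℂ))‖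
        ≤ ξ^(r+1) * |P|^n / n.factorial := by
    intro ξ hξ
    have hfac : (ξ:ℂ)^q * Complex.exp (Complex.I * (ξ:ℂ) * (P:ℂ)) - ∑ ℓ ∈ Finset.range n,
          (ξ:ℂ)^q * ((Complex.I * (ξ:ℂ) * (P:ℂ))^ℓ / (ℓ.factorial : ℂ))
        = (ξ:ℂ)^q * (Complex.exp (Complex.I * ((ξ*P : ℝ) : ℂ)) - ∑ ℓ ∈ Finset.range n,
            (Complex.I * ((ξ*P : ℝ) : ℂ))^ℓ / (ℓ.factorial : ℂ)) := by
      rw [mul_sub, Finset.mul_sum]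
      push_cast
      ring_nf
    rw [hfac, norm_mul]
    have h1 : ‖(ξ:ℂ)^q‖ = ξ^q := by
      rw [norm_pow, Complex.norm_real, Real.norm_eq_abs, _root_.abs_of_nonneg hξ.1.le]
    rw [h1]
    calc ξ^q * ‖Complex.exp (Complex.I * ((ξ*P : ℝ) : ℂ)) - ∑ ℓ ∈ Finset.range n,
            (Complex.I * ((ξ*P : ℝ) : ℂ))^ℓ / (ℓ.factorial : ℂ)‖
        ≤ ξ^q * (|ξ*P|^n / n.factorial) := by
          apply mul_le_mul_of_nonneg_left (exp_taylor_bound n (ξ*P)) (pow_nonneg hξ.1.le q)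
      _ = ξ^(r+1) * |P|^n / n.factorial := by
          rw [abs_mul, _root_.abs_of_nonneg hξ.1.le, mul_pow]
          rw [show r + 1 = q + n by omega, pow_add]
          ring
  calc ‖∫ ξ in (0:ℝ)..τ, ((ξ:ℂ)^q * Complex.exp (Complex.I * (ξ:ℂ) * (P:ℂ)) -
          ∑ ℓ ∈ Finset.range n, (ξ:ℂ)^q * ((Complex.I * (ξ:ℂ) * (P:ℂ))^ℓ / (ℓ.factorial : ℂ)))‖
      ≤ |∫ ξ in (0:ℝ)..τ, ξ^(r+1) * |P|^n / n.factorial| := by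
        apply intervalIntegral.norm_integral_le_abs_of_norm_le
        · rw [Set.uIoc_of_le hτ]
          filter_upwards [MeasureTheory.ae_restrict_mem measurableSet_Ioc] with ξ hξ
          exact hb ξ hξ
        · exact (((continuous_pow (r+1)).mul continuous_const).div_const _).intervalIntegrable 0 τ
    _ = |P|^(r+1-q) * τ^(r+2) / ((r+1-q).factorial * (r+2)) := by
        simp_rw [mul_div_assoc]
        rw [intervalIntegral.integral_mul_const, integral_pow,
          show (0:ℝ)^(r+1+1) = 0 from zero_pow (by omega), sub_zero,
          _root_.abs_of_nonneg (by positivity), hn']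
        push_cast
        field_simp
        ring
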